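/- Let g be a centerless Lie 2-algebra with MT(g) = 3, standard maximal torus t with toral basis {t1, t2, t3} and dual basis {α, β, γ} of t*, whose t-root set is Δ = {α, β, γ, α+β, α+γ, β+γ, α+β+γ}. Assume dim(g_α) = dim(g_β) = dim(g_{α+β}) ≥ dim(g_γ) ≥ dim(g_{α+γ}) and dim(g_{α+γ}) > dim(g_{β+γ}) = dim(g_{α+β+γ}). Then I := span{t2, t3} ⊕ n ⊕ ⊕_{ξ∈Δ} g_ξ is an ideal of g. -/

import Mathlib

/-- A 2-map on a Lie algebra over the field `F` (char 2 version of a restricted structure):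
`(c • x)^[2] = c^2 • x^[2]`, `ad (x^[2]) = (ad x) ∘ (ad x)` and
`(x+y)^[2] = x^[2] + y^[2] + [x,y]`. -/
structure IsTwoMap (F : Type*) [Field F] {g : Type*} [LieRing g] [LieAlgebra F g]
    (p : g → g) : Prop where
  smul_pow : ∀ (c : F) (x : g), p (c • x) = (c ^ 2) • p x
  ad_pow : ∀ x y : g, ⁅p x, y⁆ = ⁅x, ⁅x, y⁆⁆
  add_pow : ∀ x y : g, p (x + y) = p x + p y + ⁅x, y⁆

/-- An element is 2-nilpotent if some iterate of the 2-map annihilates it. -/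
def IsTwoNilpotent {g : Type*} [Zero g] (p : g → g) (x : g) : Prop :=
  ∃ k : ℕ, p^[k] x = 0

/-- A torus of a Lie 2-algebra: a Lie subalgebra closed under the 2-map on which the
2-map is invertible (bijective). -/
def IsTorus (F : Type*) [Field F] {g : Type*} [LieRing g] [LieAlgebra F g]
    (p : g → g) (t : LieSubalgebra F g) : Prop :=
  (∀ x ∈ t, p x ∈ t) ∧ Set.BijOn p (t : Set g) (t : Set g)

/-- A maximal torus of a Lie 2-algebra. -/
def IsMaxTorus (F : Type*) [Field F] {g : Type*} [LieRing g] [LieAlgebra F g]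
    (p : g → g) (t : LieSubalgebra F g) : Prop :=
  IsTorus F p t ∧ ∀ s : LieSubalgebra F g, IsTorus F p s → t ≤ s → s = t

/-- The weight (root) space of a linear functional `lam` on a torus `t`:
`g_lam = {v | [x, v] = lam x • v for all x ∈ t}`. -/
def rootSpace {F : Type*} [Field F] {g : Type*} [LieRing g] [LieAlgebra F g]
    (t : LieSubalgebra F g) (lam : Module.Dual F t) : Submodule F g where
  carrier := {v | ∀ x : t, ⁅(x : g), v⁆ = lam x • v}
  add_mem' := by
    intro a b ha hb x
    rw [lie_add, ha x, hb x, smul_add]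
  zero_mem' := by
    intro x
    rw [lie_zero, smul_zero]
  smul_mem' := by
    intro c v hv x
    rw [lie_smul, hv x, smul_comm]

/-- The set of `t`-roots: nonzero functionals with nonzero root space. -/
def rootSet {F : Type*} [Field F] {g : Type*} [LieRing g] [LieAlgebra F g]
    (t : LieSubalgebra F g) : Set (Module.Dual F t) :=
  {lam | lam ≠ 0 ∧ rootSpace t lam ≠ ⊥}

/-- The subspace `N(σ, δ) = {x ∈ g_σ : [x, g_σ] ⊆ n and [[x, g_δ], g_{σ+δ}] ⊆ n}`,
given as `Nspace n g_σ g_δ g_{σ+δ}`. -/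
def Nspace {F : Type*} [Field F] {g : Type*} [LieRing g] [LieAlgebra F g]
    (n gs gd gsd : Submodule F g) : Submodule F g where
  carrier := {x | x ∈ gs ∧ (∀ y ∈ gs, ⁅x, y⁆ ∈ n) ∧ ∀ z ∈ gd, ∀ w ∈ gsd, ⁅⁅x, z⁆, w⁆ ∈ n}
  add_mem' := by
    intro a b ha hb
    obtain ⟨ha1, ha2, ha3⟩ := ha
    obtain ⟨hb1, hb2, hb3⟩ := hb
    refine ⟨gs.add_mem ha1 hb1, fun y hy => ?_, fun z hz w hw => ?_⟩
    · rw [add_lie]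
      exact n.add_mem (ha2 y hy) (hb2 y hy)
    · rw [add_lie, add_lie]
      exact n.add_mem (ha3 z hz w hw) (hb3 z hz w hw)
  zero_mem' := by
    refine ⟨gs.zero_mem, fun y hy => ?_, fun z hz w hw => ?_⟩
    · rw [zero_lie]; exact n.zero_mem
    · rw [zero_lie, zero_lie]; exact n.zero_mem
  smul_mem' := by
    intro c x hx
    obtain ⟨h1, h2, h3⟩ := hx
    refine ⟨gs.smul_mem c h1, fun y hy => ?_, fun z hz w hw => ?_⟩
    · rw [smul_lie]; exact n.smul_mem c (h2 y hy)
    · rw [smul_lie, smul_lie]; exact n.smul_mem c (h3 z hz w hw)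


section AuxLemmas

variable {F : Type*} [Field F] {g : Type*} [LieRing g] [LieAlgebra F g]

lemma mem_rootSpace_iff {t : LieSubalgebra F g} {lam : Module.Dual F t} {v : g} :
    v ∈ rootSpace t lam ↔ ∀ x : t, ⁅(x : g), v⁆ = lam x • v := Iff.rfl

lemma aux_powBA {U V : Type*} [AddCommGroup U] [Module F U] [AddCommGroup V] [Module F V]
    (A : U →ₗ[F] V) (B : V →ₗ[F] U) (m : ℕ) (u : U) :
    ((B ∘ₗ A) ^ (m + 1)) u = B (((A ∘ₗ B) ^ m) (A u)) := by
  induction m generalizing u with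
  | zero => simp
  | succ k ih =>
    have h1 : ((B ∘ₗ A) ^ (k + 2)) u = ((B ∘ₗ A) ^ (k + 1)) ((B ∘ₗ A) u) := by
      rw [pow_succ]; rfl
    rw [h1, ih]
    have h2 : ((A ∘ₗ B) ^ (k + 1)) (A u) = ((A ∘ₗ B) ^ k) ((A ∘ₗ B) (A u)) := by
      rw [pow_succ]; rfl
    rw [h2]
    rfl

lemma aux_inj {U : Type*} [AddCommGroup U] [Module F U] {c : F} (hc : c ≠ 0)
    {N : Module.End F U} (hN : IsNilpotent N) {u : U} (hu : c • u + N u = 0) : u = 0 := by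
  obtain ⟨m, hm⟩ := hN
  have h1 : N u = (-c) • u := by
    rw [neg_smul]
    exact eq_neg_of_add_eq_zero_right hu
  have h2 : ∀ j : ℕ, (N ^ j) u = ((-c) ^ j) • u := by
    intro j
    induction j with
    | zero => simp
    | succ k ih =>
      have : (N ^ (k + 1)) u = N ((N ^ k) u) := by rw [pow_succ']; rfl
      rw [this, ih, map_smul, h1, smul_smul, ← pow_succ]
  have h3 := h2 m
  rw [hm] at h3
  have h4 : ((-c) ^ m) • u = 0 := h3.symm.trans rfl
  have h5 : (-c) ^ m ≠ 0 := pow_ne_zero _ (neg_ne_zero.mpr hc)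
  simpa [h5] using smul_eq_zero.mp h4

lemma aux_adNil (p : g → g) (hp : IsTwoMap F p) {v : g} (hv : IsTwoNilpotent p v) :
    IsNilpotent (LieAlgebra.ad F g v) := by
  obtain ⟨k, hk⟩ := hv
  refine ⟨2 ^ k, ?_⟩
  induction k generalizing v with
  | zero =>
    simp only [Function.iterate_zero, id_eq] at hk
    subst hk
    simp
  | succ k ih =>
    have hk' : p^[k] (p v) = 0 := by rwa [← Function.iterate_succ_apply]
    have h2 : LieAlgebra.ad F g (p v) = LieAlgebra.ad F g v * LieAlgebra.ad F g v := by
      ext y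
      simpa using hp.ad_pow v y
    have h3 : (LieAlgebra.ad F g v) ^ (2 ^ (k + 1)) =
        (LieAlgebra.ad F g (p v)) ^ (2 ^ k) := by
      rw [h2, ← sq, ← pow_mul, ← pow_succ']
    rw [h3, ih hk']

lemma aux_rootBr {t : LieSubalgebra F g} {lam mu : Module.Dual F t} {z v : g}
    (hz : z ∈ rootSpace t lam) (hv : v ∈ rootSpace t mu) :
    ⁅z, v⁆ ∈ rootSpace t (lam + mu) := by
  intro x
  rw [leibniz_lie, hz x, hv x, smul_lie, lie_smul, LinearMap.add_apply, add_smul]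

variable [FiniteDimensional F g]

/-- Key lemma: if `dim g_{lam+mu} < dim g_mu` then `mu τ = 0`, where `τ + ν` is the
semisimple + nilpotent decomposition of `p z` for `z ∈ g_lam`. -/
lemma aux_K1 {t : LieSubalgebra F g} {lam mu : Module.Dual F t} {z : g}
    (hz : z ∈ rootSpace t lam) {τ : t} {ν : g}
    (hνnil : IsNilpotent (LieAlgebra.ad F g ν))
    (hpz : ∀ v : g, ⁅z, ⁅z, v⁆⁆ = ⁅(τ : g), v⁆ + ⁅ν, v⁆)
    (hlt : Module.finrank F (rootSpace t (lam + mu)) < Module.finrank F (rootSpace t mu)) :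
    mu τ = 0 := by
  by_contra hc
  set U := rootSpace t mu with hU
  set V := rootSpace t (lam + mu) with hV
  have hA : ∀ v ∈ U, (LieAlgebra.ad F g z) v ∈ V := by
    intro v hv
    simpa using aux_rootBr hz hv
  set A : U →ₗ[F] V := (LieAlgebra.ad F g z).restrict hA with hAdef
  have hAinj : Function.Injective A := by
    rw [← LinearMap.ker_eq_bot]
    rw [Submodule.eq_bot_iff]
    intro u hu
    have hu0 : ⁅z, (u : g)⁆ = 0 := by
      have h0 : ((A u : V) : g) = ⁅z, (u : g)⁆ := rfl
      rw [LinearMap.mem_ker] at hu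
      rw [hu] at h0
      simpa using h0.symm
    have h1 : ⁅z, ⁅z, (u : g)⁆⁆ = 0 := by rw [hu0, lie_zero]
    have h2 : mu τ • (u : g) + (LieAlgebra.ad F g ν) (u : g) = 0 := by
      have h3 := hpz (u : g)
      have h4 : ⁅(τ : g), (u : g)⁆ = mu τ • (u : g) := u.2 τ
      rw [h1, h4] at h3
      simpa using h3.symm
    have := aux_inj hc hνnil h2
    exact Subtype.ext this
  have := LinearMap.finrank_le_finrank_of_injective hAinj
  omega

/-- Key lemma: `lam τ = 0` (for `z ∈ g_lam`, `p z = τ + ν`). -/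
lemma aux_K0 {t : LieSubalgebra F g} {lam : Module.Dual F t} {z : g}
    (hz : z ∈ rootSpace t lam) {τ : t} {ν : g}
    (hν0 : ν ∈ rootSpace t (0 : Module.Dual F t))
    (hνnil : IsNilpotent (LieAlgebra.ad F g ν))
    (hpz : ∀ v : g, ⁅z, ⁅z, v⁆⁆ = ⁅(τ : g), v⁆ + ⁅ν, v⁆)
    (hll : lam + lam = 0)
    (hne : rootSpace t lam ≠ ⊥) :
    lam τ = 0 := by
  by_contra hc
  set U := rootSpace t lam with hU
  set V := rootSpace t (0 : Module.Dual F t) with hV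
  have hA : ∀ v ∈ U, (LieAlgebra.ad F g z) v ∈ V := by
    intro v hv
    have := aux_rootBr hz hv
    rw [hll] at this
    simpa using this
  have hB : ∀ w ∈ V, (LieAlgebra.ad F g z) w ∈ U := by
    intro w hw
    have := aux_rootBr hz hw
    rw [add_zero] at this
    simpa using this
  have hM : ∀ w ∈ V, (LieAlgebra.ad F g ν) w ∈ V := by
    intro w hw
    have := aux_rootBr hν0 hw
    rw [add_zero] at this
    simpa using this
  set A : U →ₗ[F] V := (LieAlgebra.ad F g z).restrict hA with hAdef
  set B : V →ₗ[F] U := (LieAlgebra.ad F g z).restrict hB with hBdef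
  set M : V →ₗ[F] V := (LieAlgebra.ad F g ν).restrict hM with hMdef
  have hABM : A ∘ₗ B = M := by
    apply LinearMap.ext
    intro w
    apply Subtype.ext
    show ⁅z, ⁅z, (w : g)⁆⁆ = ⁅ν, (w : g)⁆
    rw [hpz]
    have hτw : ⁅(τ : g), (w : g)⁆ = 0 := by
      have := w.2 τ
      simpa using this
    rw [hτw, zero_add]
  obtain ⟨m, hm⟩ := id hνnil
  have hMpow : ∀ (j : ℕ) (w : V), (((M ^ j) w : V) : g) = ((LieAlgebra.ad F g ν) ^ j) (w : g) := by
    intro j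
    induction j with
    | zero => intro w; simp
    | succ k ih =>
      intro w
      have h1 : (M ^ (k + 1)) w = (M ^ k) (M w) := by rw [pow_succ]; rfl
      have h2 : ((LieAlgebra.ad F g ν) ^ (k + 1)) (w : g) =
          ((LieAlgebra.ad F g ν) ^ k) ((LieAlgebra.ad F g ν) (w : g)) := by rw [pow_succ]; rfl
      rw [h1, h2, ih (M w)]
      rfl
  have hBAinj : ∀ u : U, (B ∘ₗ A) u = 0 → u = 0 := by
    intro u hu
    have h2 : lam τ • (u : g) + (LieAlgebra.ad F g ν) (u : g) = 0 := by
      have h3 := hpz (u : g)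
      have h4 : ⁅(τ : g), (u : g)⁆ = lam τ • (u : g) := u.2 τ
      have h5 : ⁅z, ⁅z, (u : g)⁆⁆ = 0 := by
        have : (((B ∘ₗ A) u : U) : g) = ⁅z, ⁅z, (u : g)⁆⁆ := rfl
        rw [hu] at this
        exact this.symm
      rw [h5, h4] at h3
      simpa using h3.symm
    exact Subtype.ext (aux_inj hc hνnil h2)
  have hBAinjiter : ∀ (j : ℕ) (u : U), ((B ∘ₗ A) ^ j) u = 0 → u = 0 := by
    intro j
    induction j with
    | zero => intro u hu; simpa using hu
    | succ k ih =>
      intro u hu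
      have h1 : ((B ∘ₗ A) ^ (k + 1)) u = ((B ∘ₗ A) ^ k) ((B ∘ₗ A) u) := by rw [pow_succ]; rfl
      rw [h1] at hu
      exact hBAinj u (ih _ hu)
  obtain ⟨x0, hx0mem, hx0⟩ := Submodule.exists_mem_ne_zero_of_ne_bot hne
  set u0 : U := ⟨x0, hx0mem⟩ with hu0def
  have hzero : ((B ∘ₗ A) ^ (m + 1)) u0 = 0 := by
    rw [aux_powBA]
    have h1 : ((A ∘ₗ B) ^ m) (A u0) = (M ^ m) (A u0) := by rw [hABM]
    have h2 : (M ^ m) (A u0) = 0 := by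
      apply Subtype.ext
      rw [hMpow m (A u0), hm]
      rfl
    rw [h1, h2, map_zero]
  have : u0 = 0 := hBAinjiter (m + 1) u0 hzero
  exact hx0 (by simpa [hu0def] using congrArg Subtype.val this)

end AuxLemmas

set_option maxHeartbeats 1000000 in
/-- Case A with `dim g_{α+γ} > dim g_{β+γ} = dim g_{α+β+γ}`:
`span{t2, t3} ⊕ n ⊕ ⊕_{ξ∈Δ} g_ξ` is an ideal of `g`. -/
theorem statement13
    {F : Type*} [Field F] [IsAlgClosed F] [CharP F 2]
    {g : Type*} [LieRing g] [LieAlgebra F g] [FiniteDimensional F g]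
    (p : g → g) (hp : IsTwoMap F p)
    (hcenter : LieAlgebra.center F g = ⊥)
    (t : LieSubalgebra F g) (hmax : IsMaxTorus F p t)
    (n : Submodule F g)
    (hn : ∀ x : g, x ∈ n ↔ x ∈ rootSpace t 0 ∧ IsTwoNilpotent p x)
    (hstd : ∀ x ∈ rootSpace t 0, ∀ y ∈ n, ⁅x, y⁆ ∈ n)
    (hdecomp : rootSpace t 0 = t.toSubmodule ⊔ n)
    (hdisj : Disjoint t.toSubmodule n)
    (hrank : ∀ s : LieSubalgebra F g, IsTorus F p s → Module.finrank F s ≤ 3)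
    (hdimt : Module.finrank F t = 3)
    (t₁ t₂ t₃ : t)
    (htor1 : p (t₁ : g) = (t₁ : g)) (htor2 : p (t₂ : g) = (t₂ : g))
    (htor3 : p (t₃ : g) = (t₃ : g))
    (hspan : Submodule.span F ({t₁, t₂, t₃} : Set t) = ⊤)
    (α β γ : Module.Dual F t)
    (hα : α t₁ = 1 ∧ α t₂ = 0 ∧ α t₃ = 0)
    (hβ : β t₁ = 0 ∧ β t₂ = 1 ∧ β t₃ = 0)
    (hγ : γ t₁ = 0 ∧ γ t₂ = 0 ∧ γ t₃ = 1)
    (hroots : rootSet t = ({α, β, γ, α + β, α + γ, β + γ, α + β + γ} :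
      Set (Module.Dual F t)))
    (h1 : Module.finrank F (rootSpace t α) = Module.finrank F (rootSpace t β))
    (h2 : Module.finrank F (rootSpace t β) = Module.finrank F (rootSpace t (α + β)))
    (h3 : Module.finrank F (rootSpace t γ) ≤ Module.finrank F (rootSpace t (α + β)))
    (h4 : Module.finrank F (rootSpace t (α + γ)) ≤ Module.finrank F (rootSpace t γ))
    (h5 : Module.finrank F (rootSpace t (β + γ)) <
      Module.finrank F (rootSpace t (α + γ)))
    (h6 : Module.finrank F (rootSpace t (β + γ)) =
      Module.finrank F (rootSpace t (α + β + γ))) :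
    ∀ x y : g,
      y ∈ Submodule.span F ({(t₂ : g), (t₃ : g)} : Set g) ⊔ n ⊔
          (⨆ ξ ∈ rootSet t, rootSpace t ξ) →
      ⁅x, y⁆ ∈ Submodule.span F ({(t₂ : g), (t₃ : g)} : Set g) ⊔ n ⊔
          (⨆ ξ ∈ rootSet t, rootSpace t ξ) := by
  intro x y hy
  set I : Submodule F g := Submodule.span F ({(t₂ : g), (t₃ : g)} : Set g) ⊔ n ⊔
      (⨆ ξ ∈ rootSet t, rootSpace t ξ) with hIdef
  show ⁅x, y⁆ ∈ I
  -- characteristic two facts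
  have htwoF : (2 : F) = 0 := by exact_mod_cast CharP.cast_eq_zero F 2
  have hDD : ∀ δ : Module.Dual F t, δ + δ = 0 := fun δ => by
    rw [← two_smul F δ, htwoF, zero_smul]
  have hgg : ∀ v : g, v + v = 0 := fun v => by rw [← two_smul F v, htwoF, zero_smul]
  have hnegg : ∀ v : g, -v = v := fun v => neg_eq_of_add_eq_zero_left (hgg v)
  -- basic structure facts
  have htle : t.toSubmodule ≤ rootSpace t 0 := by rw [hdecomp]; exact le_sup_left
  have habel : ∀ (s : t) (v : g), v ∈ rootSpace t 0 → ⁅(s : g), v⁆ = 0 := by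
    intro s v hv
    have := (mem_rootSpace_iff.mp hv) s
    simpa using this
  have hts : ∀ s x' : t, ⁅(s : g), (x' : g)⁆ = 0 := fun s x' => habel s x' (htle x'.2)
  have hnle : ∀ v ∈ n, v ∈ rootSpace t 0 := fun v hv => ((hn v).mp hv).1
  have hsub3 : ∀ ξ ∈ rootSet t, rootSpace t ξ ≤ I :=
    fun ξ hξ => le_trans (le_iSup₂ (f := fun ξ _ => rootSpace t ξ) ξ hξ) le_sup_right
  have hsubn : n ≤ I := le_trans le_sup_right le_sup_left
  have hsubsp : Submodule.span F ({(t₂ : g), (t₃ : g)} : Set g) ≤ I :=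
    le_trans le_sup_left le_sup_left
  have hsubJ : Submodule.span F ({(t₂ : g), (t₃ : g)} : Set g) ⊔ n ≤ I :=
    sup_le hsubsp hsubn
  -- dual basis expansion
  have hbasis : ∀ τ : t, τ = α τ • t₁ + β τ • t₂ + γ τ • t₃ := by
    intro τ
    set e : t →ₗ[F] t := α.smulRight t₁ + β.smulRight t₂ + γ.smulRight t₃ with he
    have h1 : ∀ σ : t, e σ = α σ • t₁ + β σ • t₂ + γ σ • t₃ := fun σ => by
      simp [he]
    have hτ : τ ∈ Submodule.span F ({t₁, t₂, t₃} : Set t) := by rw [hspan]; trivial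
    have h2 : e τ = τ := by
      induction hτ using Submodule.span_induction with
      | mem u hu =>
        rcases hu with rfl | hu
        · rw [h1, hα.1, hβ.1, hγ.1]; simp
        · rcases hu with rfl | hu
          · rw [h1, hα.2.1, hβ.2.1, hγ.2.1]; simp
          · rw [Set.mem_singleton_iff] at hu
            subst hu
            rw [h1, hα.2.2, hβ.2.2, hγ.2.2]; simp
      | zero => simp
      | add u v hu hv ihu ihv => rw [map_add, ihu, ihv]
      | smul c u hu ihu => rw [map_smul, ihu]
    exact h2.symm.trans (h1 τ)
  -- p of a root vector lands in span{t₂,t₃} ⊔ n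
  have hpI : ∀ lam ∈ rootSet t, ∀ z ∈ rootSpace t lam,
      p z ∈ Submodule.span F ({(t₂ : g), (t₃ : g)} : Set g) ⊔ n := by
    intro lam hlam z hz
    have hlam2 : rootSpace t lam ≠ ⊥ := hlam.2
    -- p z centralizes t
    have hpz0 : p z ∈ rootSpace t 0 := by
      rw [mem_rootSpace_iff]
      intro s
      rw [LinearMap.zero_apply, zero_smul]
      have e1 : ∀ u : g, ⁅(s : g), ⁅z, u⁆⁆ = lam s • ⁅z, u⁆ + ⁅z, ⁅(s : g), u⁆⁆ := by
        intro u
        rw [leibniz_lie, (mem_rootSpace_iff.mp hz) s, smul_lie]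
      have hkey : ∀ v : g, ⁅⁅(s : g), p z⁆, v⁆ = 0 := by
        intro v
        have e2 : ⁅(s : g), ⁅p z, v⁆⁆ = ⁅p z, ⁅(s : g), v⁆⁆ := by
          rw [hp.ad_pow, hp.ad_pow, e1 ⁅z, v⁆, e1 v, lie_add, lie_smul, ← add_assoc,
            hgg, zero_add]
        rw [lie_lie, e2, sub_self]
      have hcen : ⁅(s : g), p z⁆ ∈ LieAlgebra.center F g := by
        rw [LieAlgebra.center, LieModule.mem_maxTrivSubmodule]
        intro v
        rw [← lie_skew, hkey, neg_zero]
      rw [hcenter] at hcen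
      exact (LieSubmodule.mem_bot _).mp hcen
    rw [hdecomp] at hpz0
    obtain ⟨τ', hτ', ν, hν, hsum⟩ := Submodule.mem_sup.mp hpz0
    set τ : t := ⟨τ', hτ'⟩ with hτdef
    have hpzv : ∀ v : g, ⁅z, ⁅z, v⁆⁆ = ⁅(τ : g), v⁆ + ⁅ν, v⁆ := by
      intro v
      rw [← hp.ad_pow z v, ← hsum, add_lie]
    have hνnil : IsNilpotent (LieAlgebra.ad F g ν) := aux_adNil p hp ((hn ν).mp hν).2
    have hν0 : ν ∈ rootSpace t 0 := hnle ν hν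
    have hll : lam + lam = 0 := hDD lam
    have hατ : α τ = 0 := by
      have hlam7 : lam = α ∨ lam = β ∨ lam = γ ∨ lam = α + β ∨ lam = α + γ ∨
          lam = β + γ ∨ lam = α + β + γ := by
        have h7 := hlam
        rw [hroots] at h7
        simpa [Set.mem_insert_iff] using h7
      rcases hlam7 with h | h | h | h | h | h | h <;> subst lam
      · exact aux_K0 hz hν0 hνnil hpzv hll hlam2
      · have hγτ : γ τ = 0 := aux_K1 hz hνnil hpzv (lt_of_lt_of_le h5 h4)
        have hagτ : (α + γ) τ = 0 := aux_K1 hz hνnil hpzv (by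
          rw [show β + (α + γ) = α + β + γ from by abel, ← h6]; exact h5)
        rw [LinearMap.add_apply, hγτ, add_zero] at hagτ
        exact hagτ
      · have hβτ : β τ = 0 := aux_K1 hz hνnil hpzv (by
          rw [show γ + β = β + γ from by abel]; linarith)
        have habτ : (α + β) τ = 0 := aux_K1 hz hνnil hpzv (by
          rw [show γ + (α + β) = α + β + γ from by abel, ← h6]; linarith)
        rw [LinearMap.add_apply, hβτ, add_zero] at habτ
        exact habτ
      · have hγτ : γ τ = 0 := aux_K1 hz hνnil hpzv (by rw [← h6]; linarith)
        have hagτ : (α + γ) τ = 0 := aux_K1 hz hνnil hpzv (by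
          rw [show α + β + (α + γ) = α + α + (β + γ) from by abel, hDD α, zero_add]
          exact h5)
        rw [LinearMap.add_apply, hγτ, add_zero] at hagτ
        exact hagτ
      · have hβτ : β τ = 0 := aux_K1 hz hνnil hpzv (by
          rw [show α + γ + β = α + β + γ from by abel, ← h6]; linarith)
        have habτ : (α + β) τ = 0 := aux_K1 hz hνnil hpzv (by
          rw [show α + γ + (α + β) = α + α + (β + γ) from by abel, hDD α, zero_add]
          linarith)
        rw [LinearMap.add_apply, hβτ, add_zero] at habτ
        exact habτ
      · have hατ' : α τ = 0 := aux_K1 hz hνnil hpzv (by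
          rw [show β + γ + α = α + β + γ from by abel, ← h6]; linarith)
        exact hατ'
      · have hατ' : α τ = 0 := aux_K1 hz hνnil hpzv (by
          rw [show α + β + γ + α = α + α + (β + γ) from by abel, hDD α, zero_add]
          linarith)
        exact hατ'
    have hτeq : τ = β τ • t₂ + γ τ • t₃ := by
      have h0 := hbasis τ
      rw [hατ, zero_smul, zero_add] at h0
      exact h0
    have hτspan : (τ : g) ∈ Submodule.span F ({(t₂ : g), (t₃ : g)} : Set g) := by
      have hc : (τ : g) = β τ • ((t₂ : t) : g) + γ τ • ((t₃ : t) : g) := by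
        simpa using congrArg (fun u : t => (u : g)) hτeq
      rw [hc]
      exact Submodule.add_mem _
        (Submodule.smul_mem _ _ (Submodule.subset_span (by simp)))
        (Submodule.smul_mem _ _ (Submodule.subset_span (by simp)))
    rw [Submodule.mem_sup]
    exact ⟨τ', hτspan, ν, hν, hsum⟩
  -- bracketing a root vector with y stays in I
  have hbr : ∀ μ : Module.Dual F t, (μ = 0 ∨ μ ∈ rootSet t) → ∀ w, w ∈ rootSpace t μ →
      ⁅w, y⁆ ∈ I := by
    intro μ hμ w hw
    obtain ⟨y1, hy1, y2, hy2, rfl⟩ := Submodule.mem_sup.mp hy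
    obtain ⟨ya, hya, yb, hyb, rfl⟩ := Submodule.mem_sup.mp hy1
    rw [lie_add, lie_add]
    refine Submodule.add_mem _ (Submodule.add_mem _ ?_ ?_) ?_
    · -- ya ∈ span{t₂, t₃} ⊆ t
      have hyat : ya ∈ t.toSubmodule := by
        refine Submodule.span_le.mpr ?_ hya
        rintro u hu
        rcases hu with rfl | hu
        · exact t₂.2
        · rw [Set.mem_singleton_iff] at hu; subst hu; exact t₃.2
      have h1 : ⁅ya, w⁆ = μ ⟨ya, hyat⟩ • w := (mem_rootSpace_iff.mp hw) ⟨ya, hyat⟩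
      have h2 : ⁅w, ya⁆ = μ ⟨ya, hyat⟩ • w := by
        rw [← lie_skew, h1, hnegg]
      rw [h2]
      rcases hμ with rfl | hμs
      · simp
      · exact hsub3 μ hμs (Submodule.smul_mem _ _ hw)
    · -- yb ∈ n
      rcases hμ with rfl | hμs
      · exact hsubn (hstd w hw yb hyb)
      · have h3 := aux_rootBr hw (hnle yb hyb)
        rw [add_zero] at h3
        exact hsub3 μ hμs h3
    · -- y2 in the sum of root spaces
      have h2 : y2 ∈ ⨆ ξ : (rootSet t), rootSpace t (ξ : Module.Dual F t) := by
        rwa [iSup_subtype'] at hy2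
      refine Submodule.iSup_induction' _ (motive := fun v _ => ⁅w, v⁆ ∈ I) ?_ ?_ ?_ h2
      · rintro ⟨ξ, hξ⟩ v hv
        rcases hμ with rfl | hμs
        · have h3 := aux_rootBr hw hv
          rw [zero_add] at h3
          exact hsub3 ξ hξ h3
        · by_cases heq : μ = ξ
          · subst heq
            have hsub' : ⁅w, v⁆ = p (w + v) - p w - p v := by rw [hp.add_pow]; abel
            rw [hsub']
            exact Submodule.sub_mem _
              (Submodule.sub_mem _ (hsubJ (hpI μ hμs _ (Submodule.add_mem _ hw hv)))
                (hsubJ (hpI μ hμs _ hw)))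
              (hsubJ (hpI μ hμs _ hv))
          · have hbrv := aux_rootBr hw hv
            by_cases hbot : rootSpace t (μ + ξ) = ⊥
            · rw [hbot, Submodule.mem_bot] at hbrv
              rw [hbrv]
              exact Submodule.zero_mem _
            · have hne0 : μ + ξ ≠ 0 := by
                intro h0
                apply heq
                have h4 : μ + (μ + ξ) = ξ := by rw [← add_assoc, hDD, zero_add]
                rw [h0, add_zero] at h4
                exact h4
              exact hsub3 _ ⟨hne0, hbot⟩ hbrv
      · simp
      · intro v1 v2 _ _ ih1 ih2
        rw [lie_add]
        exact Submodule.add_mem _ ih1 ih2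
  -- decomposition of x using the commuting idempotents ad t₁, ad t₂, ad t₃
  classical
  set ff : ↥t → Bool → g → g := fun s b v => if b then ⁅(s : g), v⁆ else v - ⁅(s : g), v⁆
    with hffdef
  have hidem : ∀ (s : t), p (s : g) = (s : g) → ∀ v : g, ⁅(s : g), ⁅(s : g), v⁆⁆ = ⁅(s : g), v⁆ := by
    intro s hs v
    rw [← hp.ad_pow, hs]
  have hfsum : ∀ (s : t) (v : g), ff s true v + ff s false v = v := by
    intro s v
    simp [hffdef]
  have hfzero : ∀ (s : t) (b : Bool), ff s b 0 = 0 := by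
    intro s b
    cases b <;> simp [hffdef]
  have hswap : ∀ (s s' : t) (v : g), ⁅(s : g), ⁅(s' : g), v⁆⁆ = ⁅(s' : g), ⁅(s : g), v⁆⁆ := by
    intro s s' v
    rw [leibniz_lie, hts s s', zero_lie, zero_add]
  have hfswap : ∀ (s s' : t) (b : Bool) (v : g),
      ⁅(s : g), ff s' b v⁆ = ff s' b ⁅(s : g), v⁆ := by
    intro s s' b v
    cases b
    · simp only [hffdef, if_neg Bool.false_ne_true]
      rw [lie_sub, hswap]
    · simp only [hffdef, if_pos rfl]
      rw [hswap]
  have heig : ∀ (s : t), p (s : g) = (s : g) → ∀ (b : Bool) (v : g),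
      ⁅(s : g), ff s b v⁆ = (cond b (1 : F) 0) • ff s b v := by
    intro s hs b v
    cases b
    · simp only [hffdef, if_neg Bool.false_ne_true, cond]
      rw [lie_sub, hidem s hs v, sub_self, zero_smul]
    · simp only [hffdef, if_pos rfl, cond]
      rw [hidem s hs v, one_smul]
  have hcomp : ∀ (b1 b2 b3 : Bool) (v : g),
      ff t₁ b1 (ff t₂ b2 (ff t₃ b3 v)) ∈
        rootSpace t ((cond b1 α 0) + (cond b2 β 0) + (cond b3 γ 0)) := by
    intro b1 b2 b3 v
    set μ : Module.Dual F t := (cond b1 α 0) + (cond b2 β 0) + (cond b3 γ 0) with hμdef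
    have hμ1 : μ t₁ = cond b1 (1 : F) 0 := by
      cases b1 <;> cases b2 <;> cases b3 <;>
        simp [hμdef, hα.1, hβ.1, hγ.1]
    have hμ2 : μ t₂ = cond b2 (1 : F) 0 := by
      cases b1 <;> cases b2 <;> cases b3 <;>
        simp [hμdef, hα.2.1, hβ.2.1, hγ.2.1]
    have hμ3 : μ t₃ = cond b3 (1 : F) 0 := by
      cases b1 <;> cases b2 <;> cases b3 <;>
        simp [hμdef, hα.2.2, hβ.2.2, hγ.2.2]
    -- reduce membership to the three generators
    rw [mem_rootSpace_iff]
    intro s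
    have hs : s ∈ Submodule.span F ({t₁, t₂, t₃} : Set t) := by rw [hspan]; trivial
    have hg1 : ⁅(t₁ : g), ff t₁ b1 (ff t₂ b2 (ff t₃ b3 v))⁆ =
        μ t₁ • ff t₁ b1 (ff t₂ b2 (ff t₃ b3 v)) := by
      rw [hμ1]
      exact heig t₁ htor1 b1 _
    have hg2 : ⁅(t₂ : g), ff t₁ b1 (ff t₂ b2 (ff t₃ b3 v))⁆ =
        μ t₂ • ff t₁ b1 (ff t₂ b2 (ff t₃ b3 v)) := by
      rw [hμ2, hfswap t₂ t₁ b1, heig t₂ htor2 b2]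
      cases b2
      · simp [hfzero]
      · simp
    have hg3 : ⁅(t₃ : g), ff t₁ b1 (ff t₂ b2 (ff t₃ b3 v))⁆ =
        μ t₃ • ff t₁ b1 (ff t₂ b2 (ff t₃ b3 v)) := by
      rw [hμ3, hfswap t₃ t₁ b1, hfswap t₃ t₂ b2, heig t₃ htor3 b3]
      cases b3
      · simp [hfzero]
      · simp
    induction hs using Submodule.span_induction with
    | mem u hu =>
      rcases hu with rfl | hu
      · exact hg1
      · rcases hu with rfl | hu
        · exact hg2
        · rw [Set.mem_singleton_iff] at hu; subst hu; exact hg3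
    | zero => simp
    | add u u' hu hu' ihu ihu' =>
      rw [show ((u + u' : t) : g) = (u : g) + (u' : g) from rfl, add_lie, ihu, ihu', map_add, add_smul]
    | smul c u hu ihu =>
      rw [show ((c • u : t) : g) = c • (u : g) from rfl, smul_lie, ihu, map_smul, smul_eq_mul, smul_smul]
  -- each component brackets into I
  have hbw : ∀ b1 b2 b3 : Bool, ⁅ff t₁ b1 (ff t₂ b2 (ff t₃ b3 x)), y⁆ ∈ I := by
    intro b1 b2 b3
    set μ : Module.Dual F t := (cond b1 α 0) + (cond b2 β 0) + (cond b3 γ 0) with hμdef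
    have hw := hcomp b1 b2 b3 x
    by_cases hμ0 : μ = 0
    · exact hbr μ (Or.inl hμ0) _ hw
    · by_cases hbot : rootSpace t μ = ⊥
      · rw [hbot, Submodule.mem_bot] at hw
        rw [hw, zero_lie]
        exact Submodule.zero_mem _
      · exact hbr μ (Or.inr ⟨hμ0, hbot⟩) _ hw
  -- assemble
  have hxeq : x =
      ff t₁ true (ff t₂ true (ff t₃ true x)) + ff t₁ false (ff t₂ true (ff t₃ true x)) +
      (ff t₁ true (ff t₂ false (ff t₃ true x)) + ff t₁ false (ff t₂ false (ff t₃ true x))) +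
      (ff t₁ true (ff t₂ true (ff t₃ false x)) + ff t₁ false (ff t₂ true (ff t₃ false x)) +
      (ff t₁ true (ff t₂ false (ff t₃ false x)) +
        ff t₁ false (ff t₂ false (ff t₃ false x)))) := by
    rw [hfsum t₁, hfsum t₁, hfsum t₁, hfsum t₁, hfsum t₂, hfsum t₂, hfsum t₃]
  have hfin : ⁅(ff t₁ true (ff t₂ true (ff t₃ true x)) +
      ff t₁ false (ff t₂ true (ff t₃ true x)) +
      (ff t₁ true (ff t₂ false (ff t₃ true x)) + ff t₁ false (ff t₂ false (ff t₃ true x))) +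
      (ff t₁ true (ff t₂ true (ff t₃ false x)) + ff t₁ false (ff t₂ true (ff t₃ false x)) +
      (ff t₁ true (ff t₂ false (ff t₃ false x)) +
        ff t₁ false (ff t₂ false (ff t₃ false x))))), y⁆ ∈ I := by
    rw [add_lie, add_lie, add_lie, add_lie, add_lie, add_lie, add_lie]
    refine Submodule.add_mem _ (Submodule.add_mem _ (Submodule.add_mem _ ?_ ?_)
      (Submodule.add_mem _ ?_ ?_)) (Submodule.add_mem _ (Submodule.add_mem _ ?_ ?_)
      (Submodule.add_mem _ ?_ ?_)) <;> apply hbw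
  rw [← hxeq] at hfin
  exact hfin
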